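/- Let N ≥ 2, Γ₁,…,Γ_N ∈ ℝ, ε ∈ ℝ, and let r⃗₁,…,r⃗_N : I → ℝ³ be differentiable curves on an interval I with r⃗ᵢ(t) ≠ r⃗ⱼ(t) for all i ≠ j and t ∈ I, satisfying the first-order truncated N-vortex equations on the ellipsoid: r⃗ᵢ' = Σ_{j≠i} Γⱼ [ (r⃗ⱼ × r⃗ᵢ)/‖r⃗ᵢ − r⃗ⱼ‖² + ε zᵢ (r⃗ᵢ × ê₃) ], where zᵢ = r⃗ᵢ · ê₃ and ê₃ = (0,0,1). Then the z-component of the center of vorticity, c_z(t) = Σᵢ Γᵢ zᵢ(t), is constant on I. -/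

import Mathlib

open Real

/-- Cross product on `ℝ³`. -/
noncomputable def cross3 (a b : EuclideanSpace ℝ (Fin 3)) : EuclideanSpace ℝ (Fin 3) :=
  WithLp.toLp 2 ![a 1 * b 2 - a 2 * b 1, a 2 * b 0 - a 0 * b 2, a 0 * b 1 - a 1 * b 0]

/-- The unit vector `ê₃ = (0,0,1)`. -/
noncomputable def e₃ : EuclideanSpace ℝ (Fin 3) := WithLp.toLp 2 ![0, 0, 1]

lemma cross3_apply2 (a b : EuclideanSpace ℝ (Fin 3)) :
    cross3 a b 2 = a 0 * b 1 - a 1 * b 0 := by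
  simp [cross3]

lemma e3_cross_apply2 (a : EuclideanSpace ℝ (Fin 3)) :
    cross3 a e₃ 2 = 0 := by
  simp [cross3, e₃]

/-- For solutions of the first-order truncated N-vortex equations on
the ellipsoid, `r⃗ᵢ' = Σ_{j≠i} Γⱼ [(r⃗ⱼ × r⃗ᵢ)/‖r⃗ᵢ − r⃗ⱼ‖² + ε zᵢ (r⃗ᵢ × ê₃)]` with
`zᵢ = r⃗ᵢ · ê₃`, the z-component of the center of vorticity `c_z = Σᵢ Γᵢ zᵢ` is
constant on the interval `I`. -/
theorem cz_conserved_ellipsoid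
    (N : ℕ) (hN : 2 ≤ N) (Γ : Fin N → ℝ) (ε : ℝ)
    (I : Set ℝ) (hI : I.OrdConnected)
    (r : Fin N → ℝ → EuclideanSpace ℝ (Fin 3))
    (hsep : ∀ t ∈ I, ∀ i j : Fin N, i ≠ j → r i t ≠ r j t)
    (heq : ∀ i : Fin N, ∀ t ∈ I,
      HasDerivAt (r i)
        (∑ j ∈ Finset.univ.erase i,
          Γ j • ((‖r i t - r j t‖ ^ 2)⁻¹ • cross3 (r j t) (r i t)
            + (ε * (r i t 2)) • cross3 (r i t) e₃)) t) :
    ∀ s ∈ I, ∀ t ∈ I, ∑ i, Γ i * r i s 2 = ∑ i, Γ i * r i t 2 := by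
  set f : ℝ → ℝ := fun t => ∑ i, Γ i * r i t 2 with hf
  -- derivative of each z-component
  have hz : ∀ t ∈ I, ∀ i : Fin N, HasDerivAt (fun t => r i t 2)
      (∑ j ∈ Finset.univ.erase i,
        Γ j * ((‖r i t - r j t‖ ^ 2)⁻¹ * (r j t 0 * r i t 1 - r j t 1 * r i t 0))) t := by
    intro t ht i
    have h := ((EuclideanSpace.proj (2 : Fin 3) : EuclideanSpace ℝ (Fin 3) →L[ℝ] ℝ)
      |>.hasFDerivAt.comp_hasDerivAt t (heq i t ht))
    have hval : (EuclideanSpace.proj (2 : Fin 3) : EuclideanSpace ℝ (Fin 3) →L[ℝ] ℝ)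
        (∑ j ∈ Finset.univ.erase i,
          Γ j • ((‖r i t - r j t‖ ^ 2)⁻¹ • cross3 (r j t) (r i t)
            + (ε * (r i t 2)) • cross3 (r i t) e₃))
        = ∑ j ∈ Finset.univ.erase i,
          Γ j * ((‖r i t - r j t‖ ^ 2)⁻¹ * (r j t 0 * r i t 1 - r j t 1 * r i t 0)) := by
      simp only [map_sum, map_add, map_smul]
      refine Finset.sum_congr rfl fun j hj => ?_
      simp [cross3_apply2, e3_cross_apply2, smul_eq_mul, e₃]
    rw [hval] at h
    exact h
  have hderiv : ∀ t ∈ I, HasDerivAt f 0 t := by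
    intro t ht
    have h : HasDerivAt f (∑ i, Γ i * (∑ j ∈ Finset.univ.erase i,
        Γ j * ((‖r i t - r j t‖ ^ 2)⁻¹ * (r j t 0 * r i t 1 - r j t 1 * r i t 0)))) t :=
      HasDerivAt.fun_sum fun i _ => (hz t ht i).const_mul (Γ i)
    convert h using 1
    set F : Fin N → Fin N → ℝ := fun i j =>
      Γ i * (Γ j * ((‖r i t - r j t‖ ^ 2)⁻¹ * (r j t 0 * r i t 1 - r j t 1 * r i t 0))) with hF
    have hanti : ∀ i j, F i j = - F j i := by
      intro i j
      simp only [hF, norm_sub_rev (r i t)]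
      ring
    have hfull : ∀ i : Fin N, ∑ j ∈ Finset.univ.erase i, F i j = ∑ j, F i j := by
      intro i
      have hFii : F i i = 0 := by have := hanti i i; linarith
      rw [← Finset.sum_erase_add _ _ (Finset.mem_univ i), hFii, add_zero]
    have : ∑ i, ∑ j, F i j = 0 := by
      have h1 : ∑ i, ∑ j, F i j = - ∑ i, ∑ j, F i j := by
        calc ∑ i, ∑ j, F i j = ∑ i, ∑ j, -F j i :=
              Finset.sum_congr rfl fun i _ => Finset.sum_congr rfl fun j _ => hanti i j
          _ = -(∑ i, ∑ j, F j i) := by simp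
          _ = -(∑ j, ∑ i, F i j) := rfl
          _ = -(∑ i, ∑ j, F i j) := by rw [Finset.sum_comm]
      linarith
    rw [show (∑ i, Γ i * (∑ j ∈ Finset.univ.erase i,
        Γ j * ((‖r i t - r j t‖ ^ 2)⁻¹ * (r j t 0 * r i t 1 - r j t 1 * r i t 0))))
        = ∑ i, ∑ j ∈ Finset.univ.erase i, F i j from
      Finset.sum_congr rfl fun i _ => by rw [Finset.mul_sum]]
    rw [Finset.sum_congr rfl fun i _ => hfull i, this]
  -- constancy
  intro s hs t ht
  have hconv : Convex ℝ I := hI.convex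
  have key := hconv.norm_image_sub_le_of_norm_hasDerivWithin_le
    (f' := fun _ => (0:ℝ)) (C := 0)
    (fun x hx => (hderiv x hx).hasDerivWithinAt)
    (fun x hx => by simp) ht hs
  simp only [zero_mul, norm_le_zero_iff, sub_eq_zero] at key
  exact key
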